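/- arXiv:1405.4372 — 2 statements merged into one kernel-verified Lean document; each statement's English description precedes it below -/
import Mathlib

section
/- For a 2×2 symmetric positive definite matrix J = Σ_j (r_j J_r(φ_j) + s_j J_r(φ_j + π/2)) with r_j, s_j ≥ 0, where J_r(φ) = (cosφ, sinφ)(cosφ, sinφ)ᵀ, one has tr(J⁻¹) = 2 Σ_k (r_k + s_k) / ( Σ_{i,i'} [ (r_i − s_i)(r_{i'} − s_{i'}) sin²(φ_i − φ_{i'}) + s_i r_{i'} + r_i s_{i'} ] ), provided the denominator (which equals 2 det J) is positive. -/
open Real Matrix Finset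

/-- Ranging direction matrix `J_r(φ)`. -/
noncomputable def Jr (φ : ℝ) : Matrix (Fin 2) (Fin 2) ℝ :=
  !![Real.cos φ ^ 2, Real.cos φ * Real.sin φ;
     Real.cos φ * Real.sin φ, Real.sin φ ^ 2]

lemma double_sum_symm_eq {m : ℕ} (f g : Fin m → Fin m → ℝ)
    (h : ∀ i j, f i j + f j i = g i j + g j i) :
    ∑ i, ∑ j, f i j = ∑ i, ∑ j, g i j := by
  have h2 : (∑ i, ∑ j, f i j) + (∑ i, ∑ j, f i j)
      = (∑ i, ∑ j, g i j) + (∑ i, ∑ j, g i j) := by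
    conv_lhs => rw [show (∑ i, ∑ j, f i j) + (∑ i, ∑ j, f i j)
      = (∑ i, ∑ j, f i j) + (∑ j, ∑ i, f i j) from by rw [Finset.sum_comm]]
    conv_rhs => rw [show (∑ i, ∑ j, g i j) + (∑ i, ∑ j, g i j)
      = (∑ i, ∑ j, g i j) + (∑ j, ∑ i, g i j) from by rw [Finset.sum_comm]]
    rw [← Finset.sum_add_distrib, ← Finset.sum_add_distrib]
    congr 1; ext i
    rw [← Finset.sum_add_distrib, ← Finset.sum_add_distrib]
    exact Finset.sum_congr rfl fun j _ => h i j
  linarith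

theorem stmt_14 (m : ℕ) (r s φ : Fin m → ℝ)
    (hr : ∀ j, 0 ≤ r j) (hs : ∀ j, 0 ≤ s j)
    (hd : 0 < ∑ i, ∑ i', ((r i - s i) * (r i' - s i') * Real.sin (φ i - φ i') ^ 2
            + s i * r i' + r i * s i')) :
    ((∑ j, (r j • Jr (φ j) + s j • Jr (φ j + Real.pi / 2)))⁻¹).trace
      = 2 * (∑ k, (r k + s k)) /
        (∑ i, ∑ i', ((r i - s i) * (r i' - s i') * Real.sin (φ i - φ i') ^ 2
          + s i * r i' + r i * s i')) := by
  set A : ℝ := ∑ j, (r j * Real.cos (φ j) ^ 2 + s j * Real.sin (φ j) ^ 2) with hA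
  set B : ℝ := ∑ j, (r j - s j) * (Real.cos (φ j) * Real.sin (φ j)) with hB
  set C : ℝ := ∑ j, (r j * Real.sin (φ j) ^ 2 + s j * Real.cos (φ j) ^ 2) with hC
  set D : ℝ := ∑ i, ∑ i', ((r i - s i) * (r i' - s i') * Real.sin (φ i - φ i') ^ 2
          + s i * r i' + r i * s i') with hD
  have hJ : (∑ j, (r j • Jr (φ j) + s j • Jr (φ j + Real.pi / 2)))
      = !![A, B; B, C] := by
    ext i j
    fin_cases i <;> fin_cases j <;>
      simp [Jr, Matrix.sum_apply, Real.cos_add_pi_div_two, Real.sin_add_pi_div_two,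
        hA, hB, hC] <;>
      exact Finset.sum_congr rfl fun j _ => by ring
  have hDdet : D = 2 * (A * C - B * B) := by
    have hAC : A * C = ∑ i, ∑ i',
        (r i * Real.cos (φ i) ^ 2 + s i * Real.sin (φ i) ^ 2) *
        (r i' * Real.sin (φ i') ^ 2 + s i' * Real.cos (φ i') ^ 2) := by
      rw [hA, hC, Finset.sum_mul_sum]
    have hBB : B * B = ∑ i, ∑ i',
        ((r i - s i) * (Real.cos (φ i) * Real.sin (φ i))) *
        ((r i' - s i') * (Real.cos (φ i') * Real.sin (φ i'))) := by
      rw [hB, Finset.sum_mul_sum]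
    rw [hD, hAC, hBB]
    simp_rw [← Finset.sum_sub_distrib, Finset.mul_sum]
    apply double_sum_symm_eq
    intro i j
    have hpi := Real.sin_sq_add_cos_sq (φ i)
    have hpj := Real.sin_sq_add_cos_sq (φ j)
    rw [Real.sin_sub, Real.sin_sub]
    linear_combination (-2 * (s i * r j + r i * s j) *
        (Real.cos (φ j) ^ 2 + Real.sin (φ j) ^ 2)) * hpi +
      (-2 * (s i * r j + r i * s j)) * hpj
  have hT : A + C = ∑ k, (r k + s k) := by
    rw [hA, hC, ← Finset.sum_add_distrib]
    refine Finset.sum_congr rfl fun j _ => ?_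
    have h := Real.sin_sq_add_cos_sq (φ j)
    linear_combination (r j + s j) * h
  have hdetpos : 0 < A * C - B * B := by rw [hDdet] at hd; linarith
  rw [hJ, Matrix.inv_def, Matrix.det_fin_two_of, Matrix.adjugate_fin_two,
    Matrix.trace_smul, Matrix.trace_fin_two_of]
  have hne : A * C - B * B ≠ 0 := ne_of_gt hdetpos
  have hDne : D ≠ 0 := ne_of_gt hd
  rw [Ring.inverse_eq_inv]
  rw [← hT, hDdet]
  simp only [Matrix.of_apply, Matrix.cons_val', Matrix.cons_val_zero, Matrix.cons_val_one,
    Matrix.empty_val', Matrix.cons_val_fin_one, Matrix.head_cons]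
  field_simp
  ring
end

section
/- Under the constraint that |Σ_i u_i e^{j2φ_i}| = 0 with all other quantities fixed, the denominator Σ_{i,i'} [u_i u_{i'} sin²(φ_i − φ_{i'}) + s_i r_{i'} + r_i s_{i'}] is maximized over angle configurations (φ_1,…,φ_m), where u_i = r_i − s_i; hence the SPEB 2Σ(r_k+s_k)/denominator is minimized exactly when Σ_i u_i e^{j2φ_i} = 0. -/
open Real Complex Finset

/-- The denominator (which equals `2 det J`) as a function of the anchor angles. -/
noncomputable def denom (m : ℕ) (r s : Fin m → ℝ) (φ : Fin m → ℝ) : ℝ :=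
  ∑ i, ∑ i', ((r i - s i) * (r i' - s i') * Real.sin (φ i - φ i') ^ 2
    + s i * r i' + r i * s i')


lemma denom_eq (m : ℕ) (r s : Fin m → ℝ) (φ : Fin m → ℝ) :
    denom m r s φ =
      ((∑ i, (r i - s i))^2 - (∑ i, (r i - s i) * Real.cos (2 * φ i))^2
        - (∑ i, (r i - s i) * Real.sin (2 * φ i))^2)/2
      + ∑ i, ∑ i', (s i * r i' + r i * s i') := by
  have h : ∀ i i' : Fin m, (r i - s i) * (r i' - s i') * Real.sin (φ i - φ i') ^ 2
      + s i * r i' + r i * s i'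
      = ((r i - s i) * (r i' - s i')
        - ((r i - s i) * Real.cos (2 * φ i)) * ((r i' - s i') * Real.cos (2 * φ i'))
        - ((r i - s i) * Real.sin (2 * φ i)) * ((r i' - s i') * Real.sin (2 * φ i')))/2
        + (s i * r i' + r i * s i') := by
    intro i i'
    have h1 : Real.sin (φ i - φ i') ^ 2 = 1/2 - Real.cos (2 * (φ i - φ i'))/2 :=
      Real.sin_sq_eq_half_sub _
    have h2 : Real.cos (2 * (φ i - φ i')) = Real.cos (2 * φ i) * Real.cos (2 * φ i')
        + Real.sin (2 * φ i) * Real.sin (2 * φ i') := by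
      rw [show 2 * (φ i - φ i') = 2 * φ i - 2 * φ i' by ring, Real.cos_sub]
    rw [h1, h2]; ring
  unfold denom
  simp only [h]
  simp only [Finset.sum_add_distrib]
  congr 1
  · simp only [← Finset.sum_div]
    congr 1
    rw [sq, sq, sq, Finset.sum_mul_sum, Finset.sum_mul_sum, Finset.sum_mul_sum]
    simp only [Finset.sum_sub_distrib]

lemma sum_exp_zero_iff (m : ℕ) (r s : Fin m → ℝ) (φ : Fin m → ℝ) :
    (∑ i, ((r i - s i : ℝ) : ℂ) * Complex.exp (Complex.I * (2 * (φ i : ℂ))) = 0) ↔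
      (∑ i, (r i - s i) * Real.cos (2 * φ i) = 0 ∧
       ∑ i, (r i - s i) * Real.sin (2 * φ i) = 0) := by
  have hre : (∑ i, ((r i - s i : ℝ) : ℂ) * Complex.exp (Complex.I * (2 * (φ i : ℂ)))).re
      = ∑ i, (r i - s i) * Real.cos (2 * φ i) := by
    rw [Complex.re_sum]
    refine Finset.sum_congr rfl fun i _ => ?_
    simp [Complex.exp_re, Complex.exp_im, Complex.mul_re, Complex.mul_im]
  have him : (∑ i, ((r i - s i : ℝ) : ℂ) * Complex.exp (Complex.I * (2 * (φ i : ℂ)))).im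
      = ∑ i, (r i - s i) * Real.sin (2 * φ i) := by
    rw [Complex.im_sum]
    refine Finset.sum_congr rfl fun i _ => ?_
    simp [Complex.exp_re, Complex.exp_im, Complex.mul_re, Complex.mul_im]
  rw [Complex.ext_iff, hre, him, Complex.zero_re, Complex.zero_im]

theorem stmt_15 (m : ℕ) (r s : Fin m → ℝ)
    (hr : ∀ j, 0 ≤ r j) (hs : ∀ j, 0 ≤ s j)
    (φstar : Fin m → ℝ)
    (hstar : ∑ i, ((r i - s i : ℝ) : ℂ) * Complex.exp (Complex.I * (2 * (φstar i : ℂ))) = 0) :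
    ∀ φ : Fin m → ℝ,
      denom m r s φ ≤ denom m r s φstar ∧
      (denom m r s φ = denom m r s φstar ↔
        ∑ i, ((r i - s i : ℝ) : ℂ) * Complex.exp (Complex.I * (2 * (φ i : ℂ))) = 0) ∧
      (0 < denom m r s φ →
        2 * (∑ k, (r k + s k)) / denom m r s φstar
          ≤ 2 * (∑ k, (r k + s k)) / denom m r s φ) := by
  intro φ
  obtain ⟨hA0, hB0⟩ := (sum_exp_zero_iff m r s φstar).mp hstar
  have hdstar : denom m r s φstar = (∑ i, (r i - s i))^2/2
      + ∑ i, ∑ i', (s i * r i' + r i * s i') := by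
    rw [denom_eq, hA0, hB0]; ring
  set A := ∑ i, (r i - s i) * Real.cos (2 * φ i) with hA
  set B := ∑ i, (r i - s i) * Real.sin (2 * φ i) with hB
  have hd : denom m r s φ = ((∑ i, (r i - s i))^2 - A^2 - B^2)/2
      + ∑ i, ∑ i', (s i * r i' + r i * s i') := denom_eq m r s φ
  have hle : denom m r s φ ≤ denom m r s φstar := by
    rw [hd, hdstar]
    nlinarith [sq_nonneg A, sq_nonneg B]
  refine ⟨hle, ?_, ?_⟩
  · rw [sum_exp_zero_iff, ← hA, ← hB, hd, hdstar]
    constructor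
    · intro h
      have : A^2 + B^2 = 0 := by nlinarith
      constructor
      · nlinarith [sq_nonneg A, sq_nonneg B]
      · nlinarith [sq_nonneg A, sq_nonneg B]
    · rintro ⟨h1, h2⟩
      rw [h1, h2]; ring
  · intro hpos
    have hnum : 0 ≤ 2 * (∑ k, (r k + s k)) := by
      have : 0 ≤ ∑ k, (r k + s k) :=
        Finset.sum_nonneg fun k _ => add_nonneg (hr k) (hs k)
      linarith
    exact div_le_div_of_nonneg_left hnum hpos hle
end
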